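/- Let λ* be an extreme point (basic feasible solution) of the polyhedron {λ ∈ ℝ^m : λ ≥ 0, B^Tλ = 0, e^Tλ = 1} that maximizes λAx̄ − λb, and assume the optimal value is positive. Then there is no projected certificate λ̃ (i.e., λ̃ ≥ 0, λ̃ ≠ 0, λ̃B = 0, λ̃Ax̄ > λ̃b) whose support is strictly contained in the support of λ*. -/

import Mathlib

/-- An extreme point `λ*` of `{λ ≥ 0 : Bᵀλ = 0, eᵀλ = 1}` maximizing
`λAx̄ − λb` (with positive optimal value) yields a minimal projected
certificate: no projected certificate has support strictly contained in
`supp(λ*)`. -/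
theorem extreme_point_certificate_minimal (m n d : ℕ)
    (A : Matrix (Fin m) (Fin n) ℝ) (B : Matrix (Fin m) (Fin d) ℝ)
    (b : Fin m → ℝ) (xb : Fin n → ℝ)
    (S : Set (Fin m → ℝ))
    (hS : S = {l | (∀ i, 0 ≤ l i) ∧ Matrix.vecMul l B = 0 ∧ ∑ i, l i = 1})
    (ls : Fin m → ℝ) (hext : ls ∈ Set.extremePoints ℝ S)
    (hmax : ∀ l ∈ S,
      dotProduct l (A.mulVec xb) - dotProduct l b ≤
        dotProduct ls (A.mulVec xb) - dotProduct ls b)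
    (hpos : 0 < dotProduct ls (A.mulVec xb) - dotProduct ls b) :
    ¬ ∃ lt : Fin m → ℝ, (∀ i, 0 ≤ lt i) ∧ lt ≠ 0 ∧ Matrix.vecMul lt B = 0 ∧
      dotProduct lt b < dotProduct lt (A.mulVec xb) ∧
      {i | lt i ≠ 0} ⊂ {i | ls i ≠ 0} := by
  rintro ⟨lt, hltnn, hltne, hltB, _, hsub⟩
  obtain ⟨hsubset, hne⟩ := hsub
  -- note: hsubset : {i | lt i ≠ 0} ⊆ {i | ls i ≠ 0}
  obtain ⟨i0, hi0ls, hi0lt'⟩ := Set.not_subset.mp hne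
  have hi0lt : lt i0 = 0 := not_not.mp hi0lt' 
  have hmne : Nonempty (Fin m) := ⟨i0⟩
  have hSls := hext.1
  rw [hS] at hSls
  obtain ⟨hlsnn, hlsB, hlssum⟩ := hSls
  -- normalize lt
  obtain ⟨j, hj⟩ := Function.ne_iff.mp hltne
  have hspos : 0 < ∑ i, lt i :=
    Finset.sum_pos' (fun i _ => hltnn i)
      ⟨j, Finset.mem_univ j, lt_of_le_of_ne (hltnn j) (Ne.symm hj)⟩
  set s : ℝ := ∑ i, lt i with hs
  set lh : Fin m → ℝ := s⁻¹ • lt with hlh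
  have hlhnn : ∀ i, 0 ≤ lh i := fun i => mul_nonneg (inv_nonneg.mpr hspos.le) (hltnn i)
  have hlhB : Matrix.vecMul lh B = 0 := by
    rw [hlh, Matrix.smul_vecMul, hltB, smul_zero]
  have hlhsum : ∑ i, lh i = 1 := by
    simp only [hlh, Pi.smul_apply, smul_eq_mul, ← Finset.mul_sum, ← hs]
    field_simp
  have hlhi0 : lh i0 = 0 := by simp [hlh, hi0lt]
  have hlhsupp : ∀ i, ls i = 0 → lh i = 0 := by
    intro i hi
    have : lt i = 0 := by
      by_contra hc
      exact (hsubset hc) hi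
    simp [hlh, this]
  -- choose epsilon
  set g : Fin m → ℝ := fun i => if 0 < lh i then min 1 (ls i / lh i) else 1 with hg
  set ε : ℝ := Finset.univ.inf' Finset.univ_nonempty g with hε
  have hgpos : ∀ i, 0 < g i := by
    intro i
    simp only [hg]
    split_ifs with h
    · have hlsi : 0 < ls i := by
        rcases lt_or_eq_of_le (hlsnn i) with h' | h'
        · exact h'
        · exfalso; rw [hlhsupp i h'.symm] at h; exact lt_irrefl 0 h
      exact lt_min one_pos (div_pos hlsi h)
    · exact one_pos
  have hεpos : 0 < ε := by
    rw [hε, Finset.lt_inf'_iff]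
    exact fun i _ => hgpos i
  have hεle : ∀ i, ε ≤ g i := fun i => Finset.inf'_le g (Finset.mem_univ i)
  have hεle1 : ε ≤ 1 := by
    have := hεle i0
    rw [hg] at this
    simp only at this
    split_ifs at this with h
    · exact this.trans (min_le_left _ _)
    · exact this
  have hkey : ∀ i, ε * lh i ≤ ls i := by
    intro i
    rcases lt_or_ge 0 (lh i) with h | h
    · have := hεle i
      rw [hg] at this
      simp only [if_pos h] at this
      have h2 : ε ≤ ls i / lh i := this.trans (min_le_right _ _)
      calc ε * lh i ≤ (ls i / lh i) * lh i := by nlinarith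
        _ = ls i := by field_simp
    · have : lh i = 0 := le_antisymm h (hlhnn i)
      rw [this, mul_zero]; exact hlsnn i
  -- two points
  set u : Fin m → ℝ := ls + ε • (ls - lh) with hu
  set v : Fin m → ℝ := ls - ε • (ls - lh) with hv
  have huS : u ∈ S := by
    rw [hS]
    refine ⟨fun i => ?_, ?_, ?_⟩
    · simp only [hu, Pi.add_apply, Pi.smul_apply, Pi.sub_apply, smul_eq_mul]
      have := hkey i
      nlinarith [hlsnn i]
    · simp only [hu]
      rw [Matrix.add_vecMul, Matrix.smul_vecMul, Matrix.sub_vecMul, hlsB, hlhB]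
      simp
    · simp only [hu, Pi.add_apply, Pi.smul_apply, Pi.sub_apply, smul_eq_mul]
      rw [Finset.sum_add_distrib, hlssum, ← Finset.mul_sum, Finset.sum_sub_distrib, hlssum, hlhsum]
      ring
  have hvS : v ∈ S := by
    rw [hS]
    refine ⟨fun i => ?_, ?_, ?_⟩
    · simp only [hv, Pi.sub_apply, Pi.smul_apply, smul_eq_mul]
      have h1 := hlhnn i
      have h2 := hlsnn i
      nlinarith
    · simp only [hv]
      rw [Matrix.sub_vecMul, Matrix.smul_vecMul, Matrix.sub_vecMul, hlsB, hlhB]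
      simp
    · simp only [hv, Pi.sub_apply, Pi.smul_apply, smul_eq_mul]
      rw [Finset.sum_sub_distrib, hlssum, ← Finset.mul_sum, Finset.sum_sub_distrib, hlssum, hlhsum]
      ring
  have hmid : ls ∈ openSegment ℝ u v := by
    refine ⟨1/2, 1/2, one_half_pos, one_half_pos, by norm_num, ?_⟩
    funext i
    simp only [hu, hv, Pi.add_apply, Pi.smul_apply, Pi.sub_apply, smul_eq_mul]
    ring
  have := hext.2 huS hvS hmid
  have hueq : u = ls := this
  have : ε * (ls i0 - lh i0) = 0 := by
    have := congrFun hueq i0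
    simp only [hu, Pi.add_apply, Pi.smul_apply, Pi.sub_apply, smul_eq_mul] at this
    linarith
  rw [hlhi0] at this
  have : ls i0 = 0 := by
    rcases mul_eq_zero.mp this with h | h
    · exact absurd h hεpos.ne'
    · linarith
  exact hi0ls this
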